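/- Let a = (a_0, …, a_{2m}) be a distinguished type-C u-symbol with isolated points k_0, …, k_{2f}, numbered so that the corresponding entries of a' = i(a) satisfy a'_{k_0} < a'_{k_1} < ⋯ < a'_{k_{2f}}. Then for each t with 0 ≤ t < 2f, either k_t < k_{t+1}, or else k_t = k_{t+1} + 1 and [k_{t+1}, k_t] is a staircase of a whose bottom k_{t+1} is even. -/
import Mathlib


open scoped Classical

/-- The map `i` from type-C u-symbols to type-C symbols: the `j`-th entry is
`a j - ⌈j/2⌉`. -/
def mapC (a : ℕ → ℕ) : ℕ → ℕ := fun j => a j - (j + 1) / 2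

/-- A type-C u-symbol of rank `n` (with `2m+1` entries, indexed `0,…,2m`). -/
def IsUSymC (n m : ℕ) (a : ℕ → ℕ) : Prop :=
  1 ≤ a 1 ∧ (∀ i, i + 2 ≤ 2 * m → a i + 2 ≤ a (i + 2)) ∧
    (∑ j ∈ Finset.range (2 * m + 1), a j) = n + 2 * m ^ 2 + m

/-- The u-symbol `a` is distinguished: its entries are nondecreasing. -/
def DistC (m : ℕ) (a : ℕ → ℕ) : Prop := ∀ i, i + 1 ≤ 2 * m → a i ≤ a (i + 1)

/-- `k` is an isolated point of the u-symbol `a`: the `k`-th entry of `i(a)` differs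
from every other entry of `i(a)`. -/
def IsIsolC (m : ℕ) (a : ℕ → ℕ) (k : ℕ) : Prop :=
  k ≤ 2 * m ∧ ∀ l ≤ 2 * m, l ≠ k → mapC a l ≠ mapC a k

/-- `[k,l]` is a ladder of `a`: the entries `a k, …, a l` are `c, c+1, …, c+l-k`,
with `a (k-1) < c - 1` if `k > 0` and `a (l+1) > c + (l-k) + 1` if `l < 2m`. -/
def IsLadderC (m : ℕ) (a : ℕ → ℕ) (k l : ℕ) : Prop :=
  k ≤ l ∧ l ≤ 2 * m ∧ (∀ j, k ≤ j → j ≤ l → a j = a k + (j - k)) ∧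
    (0 < k → a (k - 1) + 1 < a k) ∧ (l < 2 * m → a l + 1 < a (l + 1))

/-- `[k,l]` is a staircase of `a`: `l-k+1` is even and the entries `a k, …, a l` are
`c, c, c+2, c+2, …, c+l-k-1, c+l-k-1`, with `a (k-2) < c - 2` if `k > 1` and
`a (l+2) > c + (l-k) + 1` if `l < 2m - 1`. -/
def IsStairC (m : ℕ) (a : ℕ → ℕ) (k l : ℕ) : Prop :=
  k ≤ l ∧ l ≤ 2 * m ∧ (l - k) % 2 = 1 ∧
    (∀ j, k ≤ j → j ≤ l → a j = a k + 2 * ((j - k) / 2)) ∧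
    (1 < k → a (k - 2) + 2 < a k) ∧ (l + 2 ≤ 2 * m → a l + 2 < a (l + 2))

/-- A part is a ladder or a staircase. -/
def IsPartC (m : ℕ) (a : ℕ → ℕ) (k l : ℕ) : Prop :=
  IsLadderC m a k l ∨ IsStairC m a k l

/-- `K 0, …, K (N-1)` enumerates the isolated points of `a`, ordered so that the
corresponding entries of `i(a)` are strictly increasing. -/
def EnumC (m : ℕ) (a : ℕ → ℕ) (N : ℕ) (K : ℕ → ℕ) : Prop :=
  (∀ t, t < N → IsIsolC m a (K t)) ∧
  (∀ j, IsIsolC m a j → ∃ t, t < N ∧ K t = j) ∧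
  (∀ s t, s < t → t < N → mapC a (K s) < mapC a (K t))

lemma geJ (m : ℕ) (a : ℕ → ℕ) (h1 : 1 ≤ a 1)
    (h2 : ∀ i, i + 2 ≤ 2 * m → a i + 2 ≤ a (i + 2)) :
    ∀ j, j ≤ 2 * m → j ≤ a j := by
  intro j
  induction j using Nat.strong_induction_on with
  | _ j ih =>
    intro hj
    rcases j with _ | _ | j
    · exact Nat.zero_le _
    · exact h1
    · have h3 := ih j (by omega) (by omega)
      have h4 := h2 j hj
      rw [show j + 2 = j + 1 + 1 from rfl] at h4
      omega

lemma step2 (m : ℕ) (a : ℕ → ℕ)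
    (h2 : ∀ i, i + 2 ≤ 2 * m → a i + 2 ≤ a (i + 2)) :
    ∀ d p, p + 2 * d ≤ 2 * m → a p + 2 * d ≤ a (p + 2 * d) := by
  intro d
  induction d with
  | zero => intro p _; simp
  | succ d ih =>
    intro p hp
    have h3 := ih p (by omega)
    have h4 := h2 (p + 2 * d) (by omega)
    have he : p + 2 * (d + 1) = p + 2 * d + 2 := by ring
    rw [he]
    omega

lemma auxC (m : ℕ) (a : ℕ → ℕ) (h1 : 1 ≤ a 1)
    (h2 : ∀ i, i + 2 ≤ 2 * m → a i + 2 ≤ a (i + 2))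
    (hdist : DistC m a) (k l : ℕ)
    (hk : IsIsolC m a k) (hl : IsIsolC m a l)
    (hlt : mapC a k < mapC a l) (hgt : l < k) :
    k = l + 1 ∧ Even l ∧ IsStairC m a l k := by
  obtain ⟨hk2m, hkiso⟩ := hk
  obtain ⟨hl2m, hliso⟩ := hl
  have hgeL : l ≤ a l := geJ m a h1 h2 l hl2m
  have hgeK : k ≤ a k := geJ m a h1 h2 k hk2m
  have hmonoL : a l ≤ a (l + 1) := hdist l (by omega)
  simp only [mapC] at hlt
  have hpar : k % 2 ≠ l % 2 := by
    intro hp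
    obtain ⟨d, hd⟩ : ∃ d, k = l + 2 * d := ⟨(k - l) / 2, by omega⟩
    have hs := step2 m a h2 d l (by omega)
    rw [← hd] at hs
    omega
  have hle : l % 2 = 0 := by
    by_contra h0
    obtain ⟨d, hd⟩ : ∃ d, k = (l + 1) + 2 * d := ⟨(k - l - 1) / 2, by omega⟩
    have hs := step2 m a h2 d (l + 1) (by omega)
    rw [← hd] at hs
    omega
  have hk1 : k = l + 1 := by
    by_contra h0
    obtain ⟨d, hd⟩ : ∃ d, k = (l + 1) + 2 * (d + 1) := ⟨(k - l - 3) / 2, by omega⟩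
    have hs := step2 m a h2 (d + 1) (l + 1) (by omega)
    rw [← hd] at hs
    omega
  subst hk1
  have haeq : a (l + 1) = a l := by omega
  refine ⟨rfl, Nat.even_iff.mpr hle, by omega, by omega, by omega, ?_, ?_, ?_⟩
  · intro j hj1 hj2
    have hj : j = l ∨ j = l + 1 := by omega
    rcases hj with rfl | rfl <;> omega
  · intro h1l
    by_contra h0
    have hx := h2 (l - 2) (by omega)
    rw [show l - 2 + 2 = l from by omega] at hx
    have hne2 := hkiso (l - 2) (by omega) (by omega)
    simp only [mapC] at hne2
    have hge2 : l - 2 ≤ a (l - 2) := geJ m a h1 h2 (l - 2) (by omega)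
    omega
  · intro hub
    by_contra h0
    have hx := h2 (l + 1) (by omega)
    have hne2 := hliso (l + 1 + 2) (by omega) (by omega)
    simp only [mapC] at hne2
    omega

/-- For a distinguished type-C u-symbol with isolated points `K 0, …, K (N-1)`
(ordered by the entries of `i(a)`): for each `t` with `t + 1 < N`, either
`K t < K (t+1)`, or `K t = K (t+1) + 1` and `[K (t+1), K t]` is a staircase
whose bottom `K (t+1)` is even. -/
theorem stmt8 (n m : ℕ) (hn : 1 ≤ n) (hm : 1 ≤ m) (a : ℕ → ℕ)
    (ha : IsUSymC n m a) (hdist : DistC m a)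
    (N : ℕ) (K : ℕ → ℕ) (hE : EnumC m a N K) :
    ∀ t, t + 1 < N →
      K t < K (t + 1) ∨
        (K t = K (t + 1) + 1 ∧ Even (K (t + 1)) ∧ IsStairC m a (K (t + 1)) (K t)) := by
  obtain ⟨hiso, _, hmono⟩ := hE
  intro t ht
  rcases lt_trichotomy (K t) (K (t + 1)) with h | h | h
  · exact Or.inl h
  · have hc := hmono t (t + 1) (by omega) ht
    rw [h] at hc
    exact absurd hc (lt_irrefl _)
  · exact Or.inr (auxC m a ha.1 ha.2.1 hdist (K t) (K (t + 1))
      (hiso t (by omega)) (hiso (t + 1) ht)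
      (hmono t (t + 1) (by omega) ht) h)
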